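/- Given t > 0, β > 0 and ρ > 0, set T_δ := t δ^{-β} for δ ∈ (0,1). Then there exist constants C* > 0 and δ₀ ∈ (0,1) such that Z(T_δ^{1+ρ}) ≥ C* T_δ² 𝒢(T_δ^{-1}) for all δ ∈ (0, δ₀]. -/

import Mathlib

open MeasureTheory
open scoped RealInnerProductSpace

open MeasureTheory Set Filter Real Topology

lemma aux_int_pow_exp (n : ℕ) {b : ℝ} (hb : 0 < b) :
    IntegrableOn (fun x : ℝ => x ^ n * Real.exp (-b * x)) (Set.Ioi 0) := by
  have h := integrableOn_rpow_mul_exp_neg_mul_rpow (s := (n : ℝ)) (p := 1)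
    (lt_of_lt_of_le (by norm_num) (Nat.cast_nonneg n)) one_pos hb
  refine h.congr_fun (fun x hx => ?_) measurableSet_Ioi
  simp only [Real.rpow_natCast, Real.rpow_one]

lemma aux_int_dom {f : ℝ → ℝ} (hf : Continuous f) {c : ℝ} {n : ℕ}
    (hbd : ∀ s : ℝ, 0 ≤ s → |f s| ≤ c * s ^ n) {b : ℝ} (hb : 0 < b) :
    IntegrableOn (fun s : ℝ => Real.exp (-b * s) * f s) (Set.Ioi 0) := by
  refine Integrable.mono' (((aux_int_pow_exp n hb).const_mul c)) ?_ ?_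
  · exact ((Real.continuous_exp.comp (continuous_const.mul continuous_id)).mul hf).aestronglyMeasurable
  · filter_upwards [ae_restrict_mem measurableSet_Ioi] with x hx
    have hx0 : (0:ℝ) ≤ x := le_of_lt hx
    have h1 : |Real.exp (-b * x) * f x| = Real.exp (-b * x) * |f x| := by
      rw [abs_mul, abs_of_pos (Real.exp_pos _)]
    rw [Real.norm_eq_abs, h1]
    calc Real.exp (-b * x) * |f x| ≤ Real.exp (-b * x) * (c * x ^ n) :=
          mul_le_mul_of_nonneg_left (hbd x hx0) (le_of_lt (Real.exp_pos _))
      _ = c * (x ^ n * Real.exp (-b * x)) := by ring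

lemma aux_F1_bound {f : ℝ → ℝ} (hf : Continuous f) {c : ℝ} {n : ℕ}
    (hbd : ∀ s : ℝ, 0 ≤ s → |f s| ≤ c * s ^ n) :
    ∀ s : ℝ, 0 ≤ s → |∫ u in (0:ℝ)..s, f u| ≤ c * s ^ (n + 1) := by
  intro s hs
  have hc : ∀ u ∈ Set.uIoc (0:ℝ) s, ‖f u‖ ≤ c * s ^ n := by
    intro u hu
    rw [Set.uIoc_of_le hs] at hu
    have hu0 : 0 ≤ u := le_of_lt hu.1
    refine le_trans (hbd u hu0) ?_
    have hcn : 0 ≤ c := by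
      have := hbd 1 zero_le_one
      simpa using le_trans (abs_nonneg _) this
    exact mul_le_mul_of_nonneg_left (pow_le_pow_left₀ hu0 hu.2 n) hcn
  have := intervalIntegral.norm_integral_le_of_norm_le_const hc
  rw [Real.norm_eq_abs] at this
  calc |∫ u in (0:ℝ)..s, f u| ≤ c * s ^ n * |s - 0| := this
    _ = c * s ^ (n+1) := by rw [sub_zero, abs_of_nonneg hs]; ring

lemma laplace_step {f : ℝ → ℝ} (hf : Continuous f) {c : ℝ} {n : ℕ}
    (hbd : ∀ s : ℝ, 0 ≤ s → |f s| ≤ c * s ^ n) {b : ℝ} (hb : 0 < b) :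
    (∫ s in Set.Ioi (0:ℝ), Real.exp (-b * s) * f s)
      = b * ∫ s in Set.Ioi (0:ℝ), Real.exp (-b * s) * (∫ u in (0:ℝ)..s, f u) := by
  set F1 : ℝ → ℝ := fun s => ∫ u in (0:ℝ)..s, f u with hF1
  have hF1d : ∀ s : ℝ, HasDerivAt F1 (f s) s := fun s =>
    intervalIntegral.integral_hasDerivAt_right (hf.intervalIntegrable _ _)
      hf.stronglyMeasurable.stronglyMeasurableAtFilter hf.continuousAt
  have hF1c : Continuous F1 := by
    apply continuous_iff_continuousAt.2
    exact fun s => (hF1d s).continuousAt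
  have hF1bd := aux_F1_bound hf hbd
  -- integrability
  have hI1 : IntegrableOn (fun s : ℝ => Real.exp (-b * s) * f s) (Set.Ioi 0) :=
    aux_int_dom hf hbd hb
  have hI2 : IntegrableOn (fun s : ℝ => Real.exp (-b * s) * F1 s) (Set.Ioi 0) :=
    aux_int_dom hF1c hF1bd hb
  -- integration by parts identity on [0, R]
  have key : ∀ R : ℝ, (∫ s in (0:ℝ)..R, Real.exp (-b * s) * f s)
      = Real.exp (-b * R) * F1 R + b * ∫ s in (0:ℝ)..R, Real.exp (-b * s) * F1 s := by
    intro R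
    have hu : ∀ x ∈ Set.uIcc (0:ℝ) R,
        HasDerivAt (fun s : ℝ => Real.exp (-b * s)) (-b * Real.exp (-b * x)) x := by
      intro x _
      have h1 : HasDerivAt (fun s : ℝ => -b * s) (-b) x := by
        simpa using (hasDerivAt_id x).const_mul (-b)
      simpa [mul_comm] using h1.exp
    have hv : ∀ x ∈ Set.uIcc (0:ℝ) R, HasDerivAt F1 (f x) x := fun x _ => hF1d x
    have h1 : IntervalIntegrable (fun x : ℝ => -b * Real.exp (-b * x)) volume 0 R :=
      (Continuous.intervalIntegrable (by continuity) _ _)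
    have h2 : IntervalIntegrable f volume 0 R := hf.intervalIntegrable _ _
    have := intervalIntegral.integral_mul_deriv_eq_deriv_mul hu hv h1 h2
    rw [this]
    have hF10 : F1 0 = 0 := intervalIntegral.integral_same
    rw [hF10]
    have hswap : (∫ x in (0:ℝ)..R, -b * Real.exp (-b * x) * F1 x)
        = -b * ∫ x in (0:ℝ)..R, Real.exp (-b * x) * F1 x := by
      rw [← intervalIntegral.integral_const_mul]
      apply intervalIntegral.integral_congr
      intro x _; ring
    rw [hswap]; ring
  -- limits
  have L1 : Tendsto (fun R => ∫ s in (0:ℝ)..R, Real.exp (-b * s) * f s) atTop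
      (𝓝 (∫ s in Set.Ioi (0:ℝ), Real.exp (-b * s) * f s)) :=
    intervalIntegral_tendsto_integral_Ioi 0 hI1 tendsto_id
  have L2 : Tendsto (fun R => ∫ s in (0:ℝ)..R, Real.exp (-b * s) * F1 s) atTop
      (𝓝 (∫ s in Set.Ioi (0:ℝ), Real.exp (-b * s) * F1 s)) :=
    intervalIntegral_tendsto_integral_Ioi 0 hI2 tendsto_id
  have L3 : Tendsto (fun R => Real.exp (-b * R) * F1 R) atTop (𝓝 0) := by
    have hmain : Tendsto (fun R : ℝ => c * (R ^ ((n:ℝ) + 1) * Real.exp (-b * R))) atTop (𝓝 0) := by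
      have := tendsto_rpow_mul_exp_neg_mul_atTop_nhds_zero ((n:ℝ)+1) b hb
      simpa using this.const_mul c
    apply squeeze_zero_norm' _ hmain
    filter_upwards [eventually_ge_atTop (0:ℝ)] with R hR
    rw [Real.norm_eq_abs, abs_mul, abs_of_pos (Real.exp_pos _)]
    calc Real.exp (-b * R) * |F1 R| ≤ Real.exp (-b * R) * (c * R ^ (n+1)) :=
          mul_le_mul_of_nonneg_left (hF1bd R hR) (le_of_lt (Real.exp_pos _))
      _ = c * (R ^ ((n:ℝ)+1) * Real.exp (-b * R)) := by
          rw [show ((n:ℝ)+1) = ((n+1 : ℕ) : ℝ) by push_cast; ring, Real.rpow_natCast]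
          ring
  have L4 : Tendsto (fun R => Real.exp (-b * R) * F1 R
      + b * ∫ s in (0:ℝ)..R, Real.exp (-b * s) * F1 s) atTop
      (𝓝 (0 + b * ∫ s in Set.Ioi (0:ℝ), Real.exp (-b * s) * F1 s)) :=
    L3.add (L2.const_mul b)
  have := tendsto_nhds_unique L1 ((tendsto_congr (fun R => (key R))).2 L4)
  rw [this, zero_add]

lemma moment0 {b : ℝ} (hb : 0 < b) :
    (∫ s in Set.Ioi (0:ℝ), Real.exp (-b * s)) = 1 / b := by
  have h := integral_comp_mul_left_Ioi (fun x : ℝ => Real.exp (-x)) 0 hb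
  simp only [mul_zero] at h
  have : (fun x : ℝ => Real.exp (-(b * x))) = fun x : ℝ => Real.exp (-b * x) := by
    funext x; rw [neg_mul]
  rw [this] at h
  rw [h, integral_exp_neg_Ioi_zero, smul_eq_mul, mul_one, one_div]

lemma moment1 {b : ℝ} (hb : 0 < b) :
    (∫ s in Set.Ioi (0:ℝ), Real.exp (-b * s) * s) = 1 / b ^ 2 := by
  have h := laplace_step (f := fun _ : ℝ => 1) continuous_const (c := 1) (n := 0)
    (by intro s hs; simp) hb
  simp only [intervalIntegral.integral_const, smul_eq_mul, mul_one, sub_zero] at h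
  rw [moment0 hb] at h
  have hb' : b ≠ 0 := ne_of_gt hb
  field_simp at h ⊢
  linarith [h]

lemma moment2 {b : ℝ} (hb : 0 < b) :
    (∫ s in Set.Ioi (0:ℝ), Real.exp (-b * s) * s ^ 2) = 2 / b ^ 3 := by
  have h := laplace_step (f := fun u : ℝ => 2 * u) (by continuity) (c := 2) (n := 1)
    (by intro s hs; show |2*s| ≤ 2 * s ^ 1; rw [abs_of_nonneg (by linarith), pow_one]) hb
  have hint : ∀ s : ℝ, (∫ u in (0:ℝ)..s, 2 * u) = s ^ 2 := by
    intro s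
    rw [intervalIntegral.integral_const_mul, integral_id]
    ring
  simp only [hint] at h
  have h2 : (∫ s in Set.Ioi (0:ℝ), Real.exp (-b * s) * (2 * s))
      = 2 * ∫ s in Set.Ioi (0:ℝ), Real.exp (-b * s) * s := by
    rw [← integral_const_mul]
    congr 1; funext s; ring
  rw [h2, moment1 hb] at h
  have hb' : b ≠ 0 := ne_of_gt hb
  field_simp at h ⊢
  linarith [h]

lemma core {F : ℝ → ℝ} (hFc : Continuous F) (hFnn : ∀ s, 0 ≤ F s) {c : ℝ}
    (hc : 0 ≤ c) (hFbd : ∀ s : ℝ, 0 ≤ s → F s ≤ c * s ^ 2) {T ρ : ℝ} (hT : 1 ≤ T) (hρ : 0 < ρ)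
    (htail : 16 * c * T ^ 3 * Real.exp (-(T ^ ρ / 2)) ≤ ∫ s in (0:ℝ)..1, F s) :
    (∫ s in Set.Ioi (0:ℝ), Real.exp (-T⁻¹ * s) * F s)
      ≤ 2 * ∫ s in (0:ℝ)..(T ^ (1+ρ) : ℝ), F s := by
  have hT0 : 0 < T := lt_of_lt_of_le one_pos hT
  set A : ℝ := T ^ (1+ρ) with hA_def
  have hA1 : 1 ≤ A := Real.one_le_rpow hT (by linarith)
  have hA0 : 0 < A := lt_of_lt_of_le one_pos hA1
  have hb : 0 < T⁻¹ := inv_pos.2 hT0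
  have hFabs : ∀ s : ℝ, 0 ≤ s → |F s| ≤ c * s ^ 2 := fun s hs => by
    rw [abs_of_nonneg (hFnn s)]; exact hFbd s hs
  have hIOn : IntegrableOn (fun s : ℝ => Real.exp (-T⁻¹ * s) * F s) (Set.Ioi 0) :=
    aux_int_dom hFc hFabs hb
  -- split the integral
  have hsplit : (∫ s in Set.Ioi (0:ℝ), Real.exp (-T⁻¹ * s) * F s)
      = (∫ s in Set.Ioc (0:ℝ) A, Real.exp (-T⁻¹ * s) * F s)
        + ∫ s in Set.Ioi A, Real.exp (-T⁻¹ * s) * F s := by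
    rw [← setIntegral_union (Set.Ioc_disjoint_Ioi le_rfl) measurableSet_Ioi
      (hIOn.mono_set Set.Ioc_subset_Ioi_self) (hIOn.mono_set (Set.Ioi_subset_Ioi hA0.le)),
      Set.Ioc_union_Ioi_eq_Ioi hA0.le]
  -- first piece
  have hp1 : (∫ s in Set.Ioc (0:ℝ) A, Real.exp (-T⁻¹ * s) * F s)
      ≤ ∫ s in (0:ℝ)..A, F s := by
    rw [intervalIntegral.integral_of_le hA0.le]
    refine setIntegral_mono_on (hIOn.mono_set Set.Ioc_subset_Ioi_self)
      (hFc.integrableOn_Ioc) measurableSet_Ioc ?_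
    intro s hs
    have h1 : Real.exp (-T⁻¹ * s) ≤ 1 := by
      apply Real.exp_le_one_iff.2
      have := hs.1
      nlinarith [inv_pos.2 hT0]
    calc Real.exp (-T⁻¹ * s) * F s ≤ 1 * F s :=
          mul_le_mul_of_nonneg_right h1 (hFnn s)
      _ = F s := one_mul _
  -- second piece
  set μ : ℝ := (2 * T)⁻¹ with hμ_def
  have hμ : 0 < μ := by positivity
  have hμA : μ * A = T ^ ρ / 2 := by
    have : A = T * T ^ ρ := by
      rw [hA_def, Real.rpow_add hT0, Real.rpow_one]
    rw [this, hμ_def]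
    field_simp
  have hp2 : (∫ s in Set.Ioi A, Real.exp (-T⁻¹ * s) * F s)
      ≤ 16 * c * T ^ 3 * Real.exp (-(T ^ ρ / 2)) := by
    have hbound : ∀ s ∈ Set.Ioi A, Real.exp (-T⁻¹ * s) * F s
        ≤ Real.exp (-(T ^ ρ / 2)) * c * (Real.exp (-μ * s) * s ^ 2) := by
      intro s hs
      have hsA : A ≤ s := le_of_lt hs
      have hs0 : (0:ℝ) ≤ s := le_trans hA0.le hsA
      have hexp : Real.exp (-T⁻¹ * s) = Real.exp (-μ * s) * Real.exp (-μ * s) := by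
        rw [← Real.exp_add]
        congr 1
        rw [hμ_def]
        field_simp
        ring
      have he1 : Real.exp (-μ * s) ≤ Real.exp (-(T ^ ρ / 2)) := by
        apply Real.exp_le_exp.2
        rw [← hμA]
        nlinarith
      calc Real.exp (-T⁻¹ * s) * F s
          ≤ Real.exp (-T⁻¹ * s) * (c * s ^ 2) :=
            mul_le_mul_of_nonneg_left (hFbd s hs0) (Real.exp_pos _).le
        _ = (Real.exp (-μ * s) * Real.exp (-μ * s)) * (c * s ^ 2) := by rw [hexp]
        _ ≤ (Real.exp (-(T ^ ρ / 2)) * Real.exp (-μ * s)) * (c * s ^ 2) := by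
            apply mul_le_mul_of_nonneg_right _ (by positivity)
            exact mul_le_mul_of_nonneg_right he1 (Real.exp_pos _).le
        _ = Real.exp (-(T ^ ρ / 2)) * c * (Real.exp (-μ * s) * s ^ 2) := by ring
    have hint2 : IntegrableOn (fun s : ℝ => Real.exp (-(T ^ ρ / 2)) * c * (Real.exp (-μ * s) * s ^ 2))
        (Set.Ioi A) := by
      apply Integrable.const_mul
      have := aux_int_dom (f := fun s : ℝ => s ^ 2) (by continuity) (c := 1) (n := 2)
        (by intro s hs; rw [abs_of_nonneg (by positivity), one_mul]) hμ
      exact this.mono_set (Set.Ioi_subset_Ioi hA0.le)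
    calc (∫ s in Set.Ioi A, Real.exp (-T⁻¹ * s) * F s)
        ≤ ∫ s in Set.Ioi A, Real.exp (-(T ^ ρ / 2)) * c * (Real.exp (-μ * s) * s ^ 2) :=
          setIntegral_mono_on (hIOn.mono_set (Set.Ioi_subset_Ioi hA0.le)) hint2
            measurableSet_Ioi hbound
      _ ≤ ∫ s in Set.Ioi (0:ℝ), Real.exp (-(T ^ ρ / 2)) * c * (Real.exp (-μ * s) * s ^ 2) := by
          apply setIntegral_mono_set
          · apply Integrable.const_mul
            have := aux_int_dom (f := fun s : ℝ => s ^ 2) (by continuity) (c := 1) (n := 2)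
              (by intro s hs; rw [abs_of_nonneg (by positivity), one_mul]) hμ
            exact this
          · filter_upwards with s using by positivity
          · exact HasSubset.Subset.eventuallyLE (Set.Ioi_subset_Ioi hA0.le)
      _ = Real.exp (-(T ^ ρ / 2)) * c * (2 / μ ^ 3) := by
          rw [integral_const_mul, moment2 hμ]
      _ = 16 * c * T ^ 3 * Real.exp (-(T ^ ρ / 2)) := by
          rw [hμ_def, inv_pow, div_inv_eq_mul]
          ring
  -- conclusion
  have hmono : (∫ s in (0:ℝ)..1, F s) ≤ ∫ s in (0:ℝ)..A, F s := by
    have hsub := intervalIntegral.integral_interval_sub_left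
      (hFc.intervalIntegrable (0:ℝ) A : IntervalIntegrable F volume 0 A)
      (hFc.intervalIntegrable (0:ℝ) 1 : IntervalIntegrable F volume 0 1)
    have hnn : (0:ℝ) ≤ ∫ s in (1:ℝ)..A, F s :=
      intervalIntegral.integral_nonneg hA1 (fun u _ => hFnn u)
    linarith [hsub ▸ hnn]
  calc (∫ s in Set.Ioi (0:ℝ), Real.exp (-T⁻¹ * s) * F s)
      = (∫ s in Set.Ioc (0:ℝ) A, Real.exp (-T⁻¹ * s) * F s)
        + ∫ s in Set.Ioi A, Real.exp (-T⁻¹ * s) * F s := hsplit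
    _ ≤ (∫ s in (0:ℝ)..A, F s) + 16 * c * T ^ 3 * Real.exp (-(T ^ ρ / 2)) :=
        add_le_add hp1 hp2
    _ ≤ (∫ s in (0:ℝ)..A, F s) + ∫ s in (0:ℝ)..1, F s := add_le_add_right htail _
    _ ≤ (∫ s in (0:ℝ)..A, F s) + ∫ s in (0:ℝ)..A, F s := add_le_add_right hmono _
    _ = 2 * ∫ s in (0:ℝ)..A, F s := by ring

lemma core2 {h : ℝ → ℝ} (hhc : Continuous h) {c : ℝ} (hc0 : 0 ≤ c)
    (hbd : ∀ s : ℝ, |h s| ≤ c)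
    (hFnn : ∀ s : ℝ, 0 ≤ (∫ u in (0:ℝ)..s, ∫ v in (0:ℝ)..u, h v))
    (hpos : 0 < ∫ s in (0:ℝ)..1, ∫ u in (0:ℝ)..s, ∫ v in (0:ℝ)..u, h v)
    {ρ : ℝ} (hρ : 0 < ρ) :
    ∃ T₀ : ℝ, 1 ≤ T₀ ∧ ∀ T : ℝ, T₀ ≤ T →
      T ^ 2 * (∫ s in Set.Ioi (0:ℝ), Real.exp (-T⁻¹ * s) * h s)
        ≤ 2 * ∫ s in (0:ℝ)..(T ^ (1+ρ) : ℝ),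
            ∫ u in (0:ℝ)..s, ∫ v in (0:ℝ)..u, h v := by
  set F : ℝ → ℝ := fun s => ∫ u in (0:ℝ)..s, ∫ v in (0:ℝ)..u, h v with hF_def
  set H1 : ℝ → ℝ := fun s => ∫ v in (0:ℝ)..s, h v with hH1_def
  have hbd' : ∀ s : ℝ, 0 ≤ s → |h s| ≤ c * s ^ 0 := by
    intro s _; rw [pow_zero, mul_one]; exact hbd s
  have hH1d : ∀ s, HasDerivAt H1 (h s) s := fun s =>
    intervalIntegral.integral_hasDerivAt_right (hhc.intervalIntegrable _ _)
      hhc.stronglyMeasurable.stronglyMeasurableAtFilter hhc.continuousAt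
  have hH1c : Continuous H1 := continuous_iff_continuousAt.2 fun s => (hH1d s).continuousAt
  have hH1bd : ∀ s : ℝ, 0 ≤ s → |H1 s| ≤ c * s ^ (0 + 1) := aux_F1_bound hhc hbd'
  have hFd : ∀ s, HasDerivAt F (H1 s) s := fun s =>
    intervalIntegral.integral_hasDerivAt_right (hH1c.intervalIntegrable _ _)
      hH1c.stronglyMeasurable.stronglyMeasurableAtFilter hH1c.continuousAt
  have hFc : Continuous F := continuous_iff_continuousAt.2 fun s => (hFd s).continuousAt
  have hFbd : ∀ s : ℝ, 0 ≤ s → |F s| ≤ c * s ^ (0 + 1 + 1) := aux_F1_bound hH1c hH1bd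
  have hFbd2 : ∀ s : ℝ, 0 ≤ s → F s ≤ c * s ^ 2 := by
    intro s hs
    have := hFbd s hs
    rw [abs_of_nonneg (hFnn s)] at this
    simpa using this
  -- find T₀ from the tail tendsto
  have hKtend : Tendsto (fun T : ℝ => 16 * c * T ^ 3 * Real.exp (-(T ^ ρ / 2))) atTop (𝓝 0) := by
    have hcomp := (tendsto_rpow_mul_exp_neg_mul_atTop_nhds_zero (3 / ρ) (1/2)
      (by norm_num)).comp (tendsto_rpow_atTop hρ)
    have hcongr : ∀ᶠ T : ℝ in atTop,
        ((fun x : ℝ => x ^ (3/ρ) * Real.exp (-(1/2) * x)) ∘ fun T : ℝ => T ^ ρ) T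
          = T ^ 3 * Real.exp (-(T ^ ρ / 2)) := by
      filter_upwards [eventually_gt_atTop (0:ℝ)] with T hT
      simp only [Function.comp_apply]
      have h3 : ρ * (3 / ρ) = 3 := by field_simp
      rw [← Real.rpow_mul hT.le, h3, show ((3:ℝ) = ((3:ℕ):ℝ)) by norm_num,
        Real.rpow_natCast, show (-(1/2) * T ^ ρ : ℝ) = -(T ^ ρ / 2) by ring]
    have := (Tendsto.congr' hcongr hcomp).const_mul (16 * c)
    simpa [mul_assoc] using this
  have hev : ∀ᶠ T : ℝ in atTop,
      16 * c * T ^ 3 * Real.exp (-(T ^ ρ / 2)) ≤ ∫ s in (0:ℝ)..1, F s := by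
    exact hKtend.eventually_le_const hpos
  obtain ⟨T₀', hT₀'⟩ := eventually_atTop.1 hev
  refine ⟨max 1 T₀', le_max_left _ _, ?_⟩
  intro T hT
  have hT1 : 1 ≤ T := le_trans (le_max_left _ _) hT
  have hT0 : 0 < T := lt_of_lt_of_le one_pos hT1
  have htail := hT₀' T (le_trans (le_max_right _ _) hT)
  have hkey := core hFc hFnn hc0 hFbd2 hT1 hρ htail
  -- laplace identity
  have hb : 0 < T⁻¹ := inv_pos.2 hT0
  have s1 := laplace_step hhc hbd' hb
  have s2 := laplace_step hH1c hH1bd hb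
  calc T ^ 2 * (∫ s in Set.Ioi (0:ℝ), Real.exp (-T⁻¹ * s) * h s)
      = T ^ 2 * (T⁻¹ * (T⁻¹ * ∫ s in Set.Ioi (0:ℝ), Real.exp (-T⁻¹ * s) * F s)) := by
        rw [s1, s2]
    _ = (T * T⁻¹) * ((T * T⁻¹) * ∫ s in Set.Ioi (0:ℝ), Real.exp (-T⁻¹ * s) * F s) := by
        ring
    _ = ∫ s in Set.Ioi (0:ℝ), Real.exp (-T⁻¹ * s) * F s := by
        rw [mul_inv_cancel₀ hT0.ne']; ring
    _ ≤ 2 * ∫ s in (0:ℝ)..(T ^ (1+ρ) : ℝ), F s := hkey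

open scoped RealInnerProductSpace in
lemma Fquad {H : Type*} [NormedAddCommGroup H] [InnerProductSpace ℝ H] [CompleteSpace H]
    (P : ℝ → H ≃ₗᵢ[ℝ] H)
    (hP0 : ∀ x : H, P 0 x = x)
    (hPadd : ∀ s t : ℝ, ∀ x : H, P (s + t) x = P s (P t x))
    (hPcont : ∀ x : H, Continuous fun t : ℝ => P t x)
    (G : H) :
    ∀ s : ℝ, (∫ u in (0:ℝ)..s, ∫ v in (0:ℝ)..u, (⟪P v G, G⟫ : ℝ))
      = ⟪(∫ u in (0:ℝ)..s, P u G : H), (∫ u in (0:ℝ)..s, P u G : H)⟫ / 2 := by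
  set h : ℝ → ℝ := fun s => (⟪P s G, G⟫ : ℝ) with hh_def
  have hhc : Continuous h := (hPcont G).inner continuous_const
  set g : ℝ → H := fun s => ∫ u in (0:ℝ)..s, P u G with hg_def
  have hgd : ∀ s, HasDerivAt g (P s G) s := fun s =>
    intervalIntegral.integral_hasDerivAt_right ((hPcont G).intervalIntegrable _ _)
      (hPcont G).stronglyMeasurable.stronglyMeasurableAtFilter (hPcont G).continuousAt
  set H1 : ℝ → ℝ := fun s => ∫ v in (0:ℝ)..s, h v with hH1_def
  have hH1d : ∀ s, HasDerivAt H1 (h s) s := fun s =>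
    intervalIntegral.integral_hasDerivAt_right (hhc.intervalIntegrable _ _)
      hhc.stronglyMeasurable.stronglyMeasurableAtFilter hhc.continuousAt
  have hH1c : Continuous H1 := continuous_iff_continuousAt.2 fun s => (hH1d s).continuousAt
  set F : ℝ → ℝ := fun s => ∫ u in (0:ℝ)..s, H1 u with hF_def
  have hFd : ∀ s, HasDerivAt F (H1 s) s := fun s =>
    intervalIntegral.integral_hasDerivAt_right (hH1c.intervalIntegrable _ _)
      hH1c.stronglyMeasurable.stronglyMeasurableAtFilter hH1c.continuousAt
  -- inner product of flows
  have hinner : ∀ s u : ℝ, (⟪P s G, P u G⟫ : ℝ) = h (s - u) := by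
    intro s u
    have h1 : P s G = P u (P (s - u) G) := by
      rw [← hPadd u (s - u) G]
      norm_num
    rw [h1, LinearIsometryEquiv.inner_map_map]
  have hinner2 : ∀ s : ℝ, (⟪P s G, g s⟫ : ℝ) = H1 s := by
    intro s
    have hcomm := (innerSL ℝ (P s G)).intervalIntegral_comp_comm
      ((hPcont G).intervalIntegrable 0 s : IntervalIntegrable (fun u => P u G) volume 0 s)
    have : (⟪P s G, g s⟫ : ℝ) = ∫ u in (0:ℝ)..s, (⟪P s G, P u G⟫ : ℝ) := by
      rw [hg_def]
      exact hcomm.symm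
    rw [this]
    have : (∫ u in (0:ℝ)..s, (⟪P s G, P u G⟫ : ℝ)) = ∫ u in (0:ℝ)..s, h (s - u) := by
      apply intervalIntegral.integral_congr
      intro u _
      exact hinner s u
    rw [this, intervalIntegral.integral_comp_sub_left h s]
    simp [hH1_def]
  -- ψ and F have the same derivative
  set ψ : ℝ → ℝ := fun s => (⟪g s, g s⟫ : ℝ) / 2 with hψ_def
  have hψd : ∀ s, HasDerivAt ψ (H1 s) s := by
    intro s
    have h2 : HasDerivAt (fun τ => (⟪g τ, g τ⟫ : ℝ))
        ((⟪g s, P s G⟫ : ℝ) + (⟪P s G, g s⟫ : ℝ)) s :=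
      HasDerivAt.inner ℝ (hgd s) (hgd s)
    have h3 := h2.div_const 2
    have h4 : ((⟪g s, P s G⟫ : ℝ) + (⟪P s G, g s⟫ : ℝ)) / 2 = H1 s := by
      rw [← hinner2 s, real_inner_comm (P s G) (g s)]
      ring
    rw [h4] at h3
    exact h3
  have hdiff : ∀ s, HasDerivAt (fun s => F s - ψ s) 0 s := by
    intro s
    have := (hFd s).sub (hψd s)
    rw [sub_self] at this
    exact this
  have hconst := is_const_of_deriv_eq_zero (f := fun s => F s - ψ s)
    (fun x => (hdiff x).differentiableAt) (fun x => (hdiff x).deriv)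
  intro s
  have h0 : F 0 - ψ 0 = 0 := by
    simp [hF_def, hψ_def, hg_def]
  have h1 : F s - ψ s = F 0 - ψ 0 := hconst s 0
  rw [h0] at h1
  show F s = ψ s
  linarith [h1]

open scoped RealInnerProductSpace in
lemma Fpos {H : Type*} [NormedAddCommGroup H] [InnerProductSpace ℝ H] [CompleteSpace H]
    (P : ℝ → H ≃ₗᵢ[ℝ] H)
    (hP0 : ∀ x : H, P 0 x = x)
    (hPadd : ∀ s t : ℝ, ∀ x : H, P (s + t) x = P s (P t x))
    (hPcont : ∀ x : H, Continuous fun t : ℝ => P t x)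
    {G : H} (hG : G ≠ 0) :
    0 < ∫ s in (0:ℝ)..1, ∫ u in (0:ℝ)..s, ∫ v in (0:ℝ)..u, (⟪P v G, G⟫ : ℝ) := by
  have hFq := Fquad P hP0 hPadd hPcont G
  set g : ℝ → H := fun s => ∫ u in (0:ℝ)..s, P u G with hg_def
  set F : ℝ → ℝ := fun s => ∫ u in (0:ℝ)..s, ∫ v in (0:ℝ)..u, (⟪P v G, G⟫ : ℝ) with hF_def
  have hFq' : ∀ s : ℝ, F s = (⟪g s, g s⟫ : ℝ) / 2 := fun s => hFq s
  have hFnn : ∀ s, 0 ≤ F s := by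
    intro s
    rw [hFq' s]
    have := real_inner_self_nonneg (x := g s)
    positivity
  -- continuity of F
  have hhc : Continuous (fun s : ℝ => (⟪P s G, G⟫ : ℝ)) := (hPcont G).inner continuous_const
  have hH1d : ∀ s : ℝ, HasDerivAt (fun s : ℝ => ∫ v in (0:ℝ)..s, (⟪P v G, G⟫ : ℝ))
      (⟪P s G, G⟫ : ℝ) s := fun s =>
    intervalIntegral.integral_hasDerivAt_right (hhc.intervalIntegrable _ _)
      hhc.stronglyMeasurable.stronglyMeasurableAtFilter hhc.continuousAt
  have hH1c : Continuous (fun s : ℝ => ∫ v in (0:ℝ)..s, (⟪P v G, G⟫ : ℝ)) :=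
    continuous_iff_continuousAt.2 fun s => (hH1d s).continuousAt
  have hFd : ∀ s : ℝ, HasDerivAt F (∫ v in (0:ℝ)..s, (⟪P v G, G⟫ : ℝ)) s := fun s =>
    intervalIntegral.integral_hasDerivAt_right (hH1c.intervalIntegrable _ _)
      hH1c.stronglyMeasurable.stronglyMeasurableAtFilter hH1c.continuousAt
  have hFc : Continuous F := continuous_iff_continuousAt.2 fun s => (hFd s).continuousAt
  -- there is a point in (0,1) where g doesn't vanish
  have hex : ∃ s₀ ∈ Set.Ioo (0:ℝ) 1, g s₀ ≠ 0 := by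
    by_contra hcon
    push_neg at hcon
    have hgd0 : HasDerivAt g G 0 := by
      have := intervalIntegral.integral_hasDerivAt_right
        ((hPcont G).intervalIntegrable (0:ℝ) (0:ℝ) : IntervalIntegrable (fun u => P u G) volume 0 0)
        (hPcont G).stronglyMeasurable.stronglyMeasurableAtFilter (hPcont G).continuousAt
      rw [hP0 G] at this
      exact this
    rw [hasDerivAt_iff_tendsto_slope] at hgd0
    have htd : Tendsto (slope g 0) (nhdsWithin 0 (Set.Ioi 0)) (nhds G) :=
      hgd0.mono_left (nhdsWithin_mono 0 (fun x hx => ne_of_gt hx))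
    have hzero : Tendsto (slope g 0) (nhdsWithin 0 (Set.Ioi 0)) (nhds (0:H)) := by
      apply Tendsto.congr' _ tendsto_const_nhds
      filter_upwards [Ioo_mem_nhdsGT_of_mem (Set.mem_Ico.2 ⟨le_refl (0:ℝ), one_pos⟩)] with x hx
      rw [slope_def_module, hcon x hx]
      simp [hg_def]
    have := tendsto_nhds_unique hzero htd
    exact hG this.symm
  obtain ⟨s₀, hs₀mem, hs₀⟩ := hex
  have hFs₀ : 0 < F s₀ := by
    rw [hFq' s₀]
    have hn : 0 < ‖g s₀‖ := norm_pos_iff.2 hs₀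
    have : (⟪g s₀, g s₀⟫ : ℝ) = ‖g s₀‖ * ‖g s₀‖ := real_inner_self_eq_norm_mul_norm (g s₀)
    rw [this]
    nlinarith
  -- positivity of the integral
  rw [intervalIntegral.integral_of_le (zero_le_one)]
  rw [setIntegral_pos_iff_support_of_nonneg_ae (ae_of_all _ hFnn) (hFc.integrableOn_Ioc)]
  have hsub : (Function.support F ∩ Set.Ioo 0 1) ⊆ Function.support F ∩ Set.Ioc 0 1 :=
    Set.inter_subset_inter_right _ Set.Ioo_subset_Ioc_self
  refine lt_of_lt_of_le ?_ (measure_mono hsub)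
  apply IsOpen.measure_pos
  · exact (hFc.isOpen_support).inter isOpen_Ioo
  · exact ⟨s₀, ne_of_gt hFs₀, hs₀mem⟩

open scoped RealInnerProductSpace

/-- Let `(P_t)` be a strongly continuous one-parameter group of orthogonal
operators on a real Hilbert space `H`, `G ∈ H`, `h(s) = ⟨P_s G, G⟩`,
`Z(t) = 2∫₀^t∫₀^s∫₀^{s₁} h(s₂) ds₂ ds₁ ds` and `𝒢(λ) = ∫₀^∞ e^{-λs} h(s) ds`.
Given `t > 0`, `β > 0`, `ρ > 0`, set `T_δ := t δ^{-β}` for `δ ∈ (0,1)`. Then there exist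
`C* > 0` and `δ₀ ∈ (0,1)` such that `Z(T_δ^{1+ρ}) ≥ C* T_δ² 𝒢(T_δ⁻¹)` for all `δ ∈ (0, δ₀]`. -/
theorem stmt8 {H : Type*} [NormedAddCommGroup H] [InnerProductSpace ℝ H] [CompleteSpace H]
    (P : ℝ → H ≃ₗᵢ[ℝ] H)
    (hP0 : ∀ x : H, P 0 x = x)
    (hPadd : ∀ s t : ℝ, ∀ x : H, P (s + t) x = P s (P t x))
    (hPcont : ∀ x : H, Continuous fun t : ℝ => P t x)
    (G : H)
    (Z : ℝ → ℝ)
    (hZ : ∀ t : ℝ, Z t =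
      2 * ∫ s in (0:ℝ)..t, ∫ s₁ in (0:ℝ)..s, ∫ s₂ in (0:ℝ)..s₁, ⟪P s₂ G, G⟫)
    (𝒢 : ℝ → ℝ)
    (h𝒢 : ∀ l : ℝ, 𝒢 l = ∫ s in Set.Ioi (0:ℝ), Real.exp (-l * s) * ⟪P s G, G⟫)
    (t β ρ : ℝ) (ht : 0 < t) (hβ : 0 < β) (hρ : 0 < ρ) :
    ∃ C > (0:ℝ), ∃ δ₀ ∈ Set.Ioo (0:ℝ) 1, ∀ δ ∈ Set.Ioc (0:ℝ) δ₀,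
      C * (t * δ ^ (-β)) ^ 2 * 𝒢 ((t * δ ^ (-β))⁻¹) ≤ Z ((t * δ ^ (-β)) ^ (1 + ρ)) := by
  by_cases hG : G = 0
  · refine ⟨1, one_pos, 1/2, ⟨by norm_num, by norm_num⟩, ?_⟩
    intro δ hδ
    have hZ0 : Z ((t * δ ^ (-β)) ^ (1 + ρ)) = 0 := by
      rw [hZ]; simp [hG]
    have h𝒢0 : 𝒢 ((t * δ ^ (-β))⁻¹) = 0 := by
      rw [h𝒢]; simp [hG]
    rw [hZ0, h𝒢0]
    simp
  · -- nontrivial case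
    have hFq := Fquad P hP0 hPadd hPcont G
    have hFnn : ∀ s : ℝ, 0 ≤ (∫ u in (0:ℝ)..s, ∫ v in (0:ℝ)..u, (⟪P v G, G⟫ : ℝ)) := by
      intro s
      rw [hFq s]
      have := real_inner_self_nonneg (x := (∫ u in (0:ℝ)..s, P u G : H))
      positivity
    have hpos := Fpos P hP0 hPadd hPcont hG
    have hhc : Continuous (fun s : ℝ => (⟪P s G, G⟫ : ℝ)) := (hPcont G).inner continuous_const
    have hbd : ∀ s : ℝ, |(⟪P s G, G⟫ : ℝ)| ≤ ‖G‖ ^ 2 := by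
      intro s
      calc |(⟪P s G, G⟫ : ℝ)| ≤ ‖P s G‖ * ‖G‖ := abs_real_inner_le_norm _ _
        _ = ‖G‖ ^ 2 := by rw [(P s).norm_map]; ring
    obtain ⟨T₀, hT₀1, hmain⟩ := core2 hhc (by positivity) hbd hFnn hpos hρ
    -- choose δ₀
    set r : ℝ := t / T₀ with hr_def
    have hT₀pos : 0 < T₀ := lt_of_lt_of_le one_pos hT₀1
    have hrpos : 0 < r := div_pos ht hT₀pos
    set δ₀ : ℝ := min (1/2) (r ^ β⁻¹ / 2) with hδ₀_def
    have hδ₀pos : 0 < δ₀ := by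
      apply lt_min (by norm_num)
      have : 0 < r ^ β⁻¹ := Real.rpow_pos_of_pos hrpos _
      linarith
    have hδ₀lt1 : δ₀ < 1 := lt_of_le_of_lt (min_le_left _ _) (by norm_num)
    refine ⟨1, one_pos, δ₀, ⟨hδ₀pos, hδ₀lt1⟩, ?_⟩
    intro δ hδ
    obtain ⟨hδpos, hδle⟩ := hδ
    -- T ≥ T₀
    have hδβ : δ ^ β ≤ r := by
      have h1 : δ ≤ r ^ β⁻¹ := by
        refine le_trans hδle (le_trans (min_le_right _ _) ?_)
        have : 0 < r ^ β⁻¹ := Real.rpow_pos_of_pos hrpos _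
        linarith
      calc δ ^ β ≤ (r ^ β⁻¹) ^ β := Real.rpow_le_rpow hδpos.le h1 hβ.le
        _ = r := by
          rw [← Real.rpow_mul hrpos.le, inv_mul_cancel₀ hβ.ne', Real.rpow_one]
    have hδβpos : 0 < δ ^ β := Real.rpow_pos_of_pos hδpos _
    have hTM : T₀ ≤ t * δ ^ (-β) := by
      have h2 : δ ^ (-β) = (δ ^ β)⁻¹ := by
        rw [← Real.rpow_neg hδpos.le]
      rw [h2]
      have h3 : r⁻¹ ≤ (δ ^ β)⁻¹ := by
        apply one_div_le_one_div_of_le hδβpos hδβ |>.trans_eq (by rw [one_div]) |>.trans_eq' (by rw [one_div])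
      have h4 : r⁻¹ = T₀ / t := by
        rw [hr_def]
        field_simp
      calc T₀ = t * (T₀ / t) := by field_simp
        _ = t * r⁻¹ := by rw [h4]
        _ ≤ t * (δ ^ β)⁻¹ := mul_le_mul_of_nonneg_left h3 ht.le
    -- conclude
    rw [h𝒢, hZ, one_mul]
    exact hmain _ hTM
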